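/- Let A₀, A₁ be invertible n×n real matrices and suppose the line A(θ) = (1−θ)A₀ + θA₁ consists of invertible matrices for θ in an open interval containing [0,1] and is horizontal, i.e. A₁^* A₀ = A₀^* A₁. Then T := A₁ A₀^{-1} is symmetric positive definite and satisfies T (A₀A₀^*) T = A₁A₁^*. -/

import Mathlib

open Matrix

/-- if the line `(1−θ)A₀ + θA₁` is invertible on an open interval containing
`[0,1]` and horizontal (`A₁ᵀ A₀ = A₀ᵀ A₁`), then `T = A₁ A₀⁻¹` is symmetric positive definite
and solves `T (A₀A₀ᵀ) T = A₁A₁ᵀ`. -/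
theorem horizontal_line_gives_riccati {n : ℕ} {A₀ A₁ : Matrix (Fin n) (Fin n) ℝ}
    (hA0 : IsUnit A₀) (hA1 : IsUnit A₁)
    (hline : ∃ a b : ℝ, a < 0 ∧ 1 < b ∧ ∀ θ ∈ Set.Ioo a b,
      IsUnit ((1 - θ) • A₀ + θ • A₁))
    (hhor : A₁ᵀ * A₀ = A₀ᵀ * A₁) :
    (A₁ * A₀⁻¹).PosDef ∧ (A₁ * A₀⁻¹) * (A₀ * A₀ᵀ) * (A₁ * A₀⁻¹) = A₁ * A₁ᵀ := by
  classical
  obtain ⟨a, b, ha, hb, hline⟩ := hline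
  have hd0 : IsUnit A₀.det := (isUnit_iff_isUnit_det _).mp hA0
  have hd0t : IsUnit (A₀ᵀ).det := by rwa [det_transpose]
  set T := A₁ * A₀⁻¹ with hTdef
  -- key identity expressing `T` via transposes
  have key : (A₀ᵀ)⁻¹ * A₁ᵀ = T := by
    have h1 : A₁ᵀ = A₀ᵀ * (A₁ * A₀⁻¹) := by
      have h2 := congrArg (· * A₀⁻¹) hhor
      simpa [Matrix.mul_assoc, Matrix.mul_nonsing_inv _ hd0] using h2
    rw [h1, ← Matrix.mul_assoc, Matrix.nonsing_inv_mul _ hd0t, Matrix.one_mul, hTdef]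
  have hTt : Tᵀ = T := by
    rw [hTdef, transpose_mul, transpose_nonsing_inv, key, hTdef]
  have hTh : T.IsHermitian := by
    rw [Matrix.IsHermitian, conjTranspose_eq_transpose_of_trivial, hTt]
  have hA0inv : IsUnit A₀⁻¹ := (isUnit_iff_isUnit_det _).mpr (isUnit_nonsing_inv_det _ hd0)
  have hTunit : IsUnit T := hA1.mul hA0inv
  -- no nonpositive real is in the spectrum of T
  have hspec : ∀ μ : ℝ, μ ≤ 0 → IsUnit (T - μ • (1 : Matrix (Fin n) (Fin n) ℝ)) := by
    intro μ hμ
    have h1μ : (0 : ℝ) < 1 - μ := by linarith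
    set θ : ℝ := (1 - μ)⁻¹ with hθdef
    have hθ0 : 0 < θ := inv_pos.mpr h1μ
    have hθ1 : θ ≤ 1 := by
      rw [hθdef]
      rw [inv_le_one_iff₀]
      right; linarith
    have hmem : θ ∈ Set.Ioo a b := ⟨lt_trans ha hθ0, lt_of_le_of_lt hθ1 hb⟩
    have hu : IsUnit (((1 - θ) • A₀ + θ • A₁) * A₀⁻¹) := (hline θ hmem).mul hA0inv
    have hexp : ((1 - θ) • A₀ + θ • A₁) * A₀⁻¹
        = (1 - θ) • (1 : Matrix (Fin n) (Fin n) ℝ) + θ • T := by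
      rw [Matrix.add_mul, Matrix.smul_mul, Matrix.smul_mul,
        Matrix.mul_nonsing_inv _ hd0, hTdef]
    -- scalar multiple identity
    have hscal : T - μ • (1 : Matrix (Fin n) (Fin n) ℝ)
        = θ⁻¹ • ((1 - θ) • (1 : Matrix (Fin n) (Fin n) ℝ) + θ • T) := by
      rw [smul_add, smul_smul, smul_smul, inv_mul_cancel₀ (ne_of_gt hθ0), one_smul]
      have : θ⁻¹ * (1 - θ) = -μ := by
        rw [hθdef, inv_inv]
        field_simp
        ring
      rw [this, neg_smul, ← sub_eq_neg_add]
    rw [hscal, ← hexp]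
    -- `c • M` is a unit when `c ≠ 0` and `M` is a unit
    have hc : θ⁻¹ • (((1 - θ) • A₀ + θ • A₁) * A₀⁻¹)
        = (θ⁻¹ • (1 : Matrix (Fin n) (Fin n) ℝ)) * (((1 - θ) • A₀ + θ • A₁) * A₀⁻¹) := by
      rw [Matrix.smul_mul, Matrix.one_mul]
    rw [hc]
    refine IsUnit.mul ?_ hu
    refine (isUnit_iff_isUnit_det _).mpr ?_
    rw [det_smul, det_one, mul_one]
    exact (IsUnit.pow _ (isUnit_iff_ne_zero.mpr (inv_ne_zero (ne_of_gt hθ0))))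
  -- all eigenvalues of T are positive
  have heig : ∀ i, 0 < hTh.eigenvalues i := by
    intro i
    by_contra hle
    push_neg at hle
    have hmem := hTh.eigenvalues_mem_spectrum_real i
    rw [spectrum.mem_iff] at hmem
    apply hmem
    have : (algebraMap ℝ (Matrix (Fin n) (Fin n) ℝ)) (hTh.eigenvalues i) - T
        = -(T - hTh.eigenvalues i • (1 : Matrix (Fin n) (Fin n) ℝ)) := by
      rw [Algebra.algebraMap_eq_smul_one, neg_sub]
    rw [this]
    exact (hspec _ hle).neg
  have hpsd : T.PosSemidef := hTh.posSemidef_iff_eigenvalues_nonneg.mpr fun i => (heig i).le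
  have hpd : T.PosDef := by
    refine posDef_iff_dotProduct_mulVec.mpr ⟨hTh, fun x hx => ?_⟩
    rcases lt_or_eq_of_le (hpsd.dotProduct_mulVec_nonneg x) with h | h
    · exact h
    · exfalso
      have h0 : T *ᵥ x = 0 := (hpsd.dotProduct_mulVec_zero_iff x).mp h.symm
      have hinj : Function.Injective (T.mulVec) := mulVec_injective_iff_isUnit.mpr hTunit
      apply hx
      have := hinj (a₁ := x) (a₂ := 0) (by simpa using h0)
      simpa using this
  have hric : A₁ * A₀⁻¹ * (A₀ * A₀ᵀ) * ((A₀ᵀ)⁻¹ * A₁ᵀ) = A₁ * A₁ᵀ := by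
    have e1 : A₁ * A₀⁻¹ * (A₀ * A₀ᵀ) * ((A₀ᵀ)⁻¹ * A₁ᵀ)
        = A₁ * ((A₀⁻¹ * A₀) * (A₀ᵀ * (A₀ᵀ)⁻¹)) * A₁ᵀ := by noncomm_ring
    rw [e1, Matrix.nonsing_inv_mul _ hd0, Matrix.mul_nonsing_inv _ hd0t,
      Matrix.mul_one, Matrix.mul_one]
  refine ⟨hpd, ?_⟩
  show A₁ * A₀⁻¹ * (A₀ * A₀ᵀ) * (A₁ * A₀⁻¹) = A₁ * A₁ᵀ
  nth_rewrite 2 [← hTdef]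
  rw [← key]
  exact hric
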